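/- Let r₁ > 0 satisfy tanh(r₁)·r₁ ≥ log 8. Then for all points p, q in the hyperbolic plane ℍ², the closed hyperbolic ball of radius d(p,q)/2 − r₁ centered at the midpoint m of the geodesic segment [p,q] is contained in every open hyperbolic ball having both p and q on its boundary. -/
import Mathlib
set_option maxHeartbeats 4000000


open UpperHalfPlane Metric

private lemma key_alg (a b c d x y e f s R1 : ℝ) (hb : 0 < b) (hd : 0 < d) (hy : 0 < y)
    (hf : 0 < f) (hs : 1 < s)
    (E1 : (a - x) ^ 2 + (b - y) ^ 2 = 2 * (s - 1) * b * y)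
    (E2 : (c - x) ^ 2 + (d - y) ^ 2 = 2 * (s - 1) * d * y)
    (E3 : (a - c) ^ 2 + (b - d) ^ 2 = 4 * (s ^ 2 - 1) * b * d)
    (hRp : (e - a) ^ 2 + (f - b) ^ 2 = (R1 - 1) * (2 * f * b))
    (hRq : (e - c) ^ 2 + (f - d) ^ 2 = (R1 - 1) * (2 * f * d)) :
    (1 + ((e - x) ^ 2 + (f - y) ^ 2) / (2 * f * y)) * s = R1 := by
  have hs0 : 0 < s := by linarith
  have S1 : (a^2+b^2)*(2*s*b*d - (b+d)*y) - 2*a*(2*s*b*d*x - (a*d+c*b)*y)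
      + (2*s*b*d*(x^2+y^2) - ((a^2+b^2)*d+(c^2+d^2)*b)*y) = 0 := by
    linear_combination (2*s*b*d)*E1 - (b*y)*E3
  have S2 : (c^2+d^2)*(2*s*b*d - (b+d)*y) - 2*c*(2*s*b*d*x - (a*d+c*b)*y)
      + (2*s*b*d*(x^2+y^2) - ((a^2+b^2)*d+(c^2+d^2)*b)*y) = 0 := by
    linear_combination (2*s*b*d)*E2 - (d*y)*E3
  have QD : (2*s*b*d*x - (a*d+c*b)*y)^2 - (2*s*b*d - (b+d)*y)*(2*s*b*d*(x^2+y^2)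
      - ((a^2+b^2)*d+(c^2+d^2)*b)*y) = 0 := by
    linear_combination (2*s*b*d*y*d)*E1 + (2*s*b*d*y*b)*E2 - (b*d*y^2)*E3
  have X1 : 2*(a-c)*(2*s*b*d*x - (a*d+c*b)*y)
      - ((a^2+b^2)-(c^2+d^2))*(2*s*b*d - (b+d)*y) = 0 := by
    linear_combination S2 - S1
  have X2 : 2*(c*(a^2+b^2)-a*(c^2+d^2))*(2*s*b*d - (b+d)*y)
      - 2*(a-c)*(2*s*b*d*(x^2+y^2) - ((a^2+b^2)*d+(c^2+d^2)*b)*y) = 0 := by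
    linear_combination 2*c*S1 - 2*a*S2
  have X3 : 2*(c*(a^2+b^2)-a*(c^2+d^2))*(2*s*b*d*x - (a*d+c*b)*y)
      - ((a^2+b^2)-(c^2+d^2))*(2*s*b*d*(x^2+y^2) - ((a^2+b^2)*d+(c^2+d^2)*b)*y) = 0 := by
    linear_combination (c^2+d^2)*S1 - (a^2+b^2)*S2
  have hWb : (((a^2+b^2)-(c^2+d^2)-2*c*(a-c))^2 + 4*d^2*(a-c)^2)
      * (2*s*b*d - (b+d)*y)^2 = 0 := by
    linear_combination (2*(a-c))^2*QD
      - (2*(a-c)*(2*s*b*d*x - (a*d+c*b)*y) + ((a^2+b^2)-(c^2+d^2))*(2*s*b*d - (b+d)*y))*X1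
      - (2*(a-c)*(2*s*b*d - (b+d)*y))*X2
  have hWa : (((a^2+b^2)-(c^2+d^2)-2*c*(a-c))^2 + 4*d^2*(a-c)^2)
      * (2*s*b*d*x - (a*d+c*b)*y)^2 = 0 := by
    linear_combination ((a^2+b^2)-(c^2+d^2))^2*QD
      - (((a^2+b^2)-(c^2+d^2))*(2*s*b*d - (b+d)*y))*X3
      - (((a^2+b^2)-(c^2+d^2))*(2*s*b*d*(x^2+y^2) - ((a^2+b^2)*d+(c^2+d^2)*b)*y)
          + (2*(c*(a^2+b^2)-a*(c^2+d^2))*(2*s*b*d*x - (a*d+c*b)*y)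
            - ((a^2+b^2)-(c^2+d^2))*(2*s*b*d*(x^2+y^2)
              - ((a^2+b^2)*d+(c^2+d^2)*b)*y)))*X1
  have hG : 0 < (a-c)^2 + (b-d)^2 := by
    have hs1 : (0:ℝ) < 4*(s^2-1) := by nlinarith
    have h0 : 0 < 4*(s^2-1)*b*d := mul_pos (mul_pos hs1 hb) hd
    linarith [E3.ge, E3.le]
  have hWpos : 0 < ((a^2+b^2)-(c^2+d^2)-2*c*(a-c))^2 + 4*d^2*(a-c)^2 := by
    rcases eq_or_ne a c with h | h
    · subst h
      have hbd2 : 0 < (b-d)^2 := by nlinarith [hG]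
      have h4 : 0 < (b+d)^2 := pow_pos (add_pos hb hd) 2
      nlinarith [mul_pos hbd2 h4]
    · have h1 : 0 < (a-c)^2 :=
        lt_of_le_of_ne (sq_nonneg _) (Ne.symm (pow_ne_zero 2 (sub_ne_zero.mpr h)))
      have h2 : 0 < 4*d^2*(a-c)^2 := mul_pos (mul_pos (by norm_num) (pow_pos hd 2)) h1
      linarith [sq_nonneg ((a^2+b^2)-(c^2+d^2)-2*c*(a-c)), h2]
  have hDb : 2*s*b*d - (b+d)*y = 0 := by
    have h2 : (2*s*b*d - (b+d)*y)^2 = 0 :=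
      (mul_eq_zero.mp hWb).resolve_left (ne_of_gt hWpos)
    exact pow_eq_zero_iff two_ne_zero |>.mp h2
  have hDa : 2*s*b*d*x - (a*d+c*b)*y = 0 := by
    have h2 : (2*s*b*d*x - (a*d+c*b)*y)^2 = 0 :=
      (mul_eq_zero.mp hWa).resolve_left (ne_of_gt hWpos)
    exact pow_eq_zero_iff two_ne_zero |>.mp h2
  have hDg : 2*s*b*d*(x^2+y^2) - ((a^2+b^2)*d+(c^2+d^2)*b)*y = 0 := by
    linear_combination S1 - (a^2+b^2)*hDb + 2*a*hDa
  have hy' : y*(b+d) = 2*s*b*d := by linear_combination -hDb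
  have hsbd : (2*s*b*d) ≠ 0 := by positivity
  have hx' : x*(b+d) = a*d+c*b := by
    refine mul_left_cancel₀ hsbd ?_
    linear_combination (b+d)*hDa + (a*d+c*b)*hy'
  have hg' : (x^2+y^2)*(b+d) = (a^2+b^2)*d+(c^2+d^2)*b := by
    refine mul_left_cancel₀ hsbd ?_
    linear_combination (b+d)*hDg + ((a^2+b^2)*d+(c^2+d^2)*b)*hy'
  have hbd0 : (b+d) ≠ 0 := by positivity
  have key : (2*f*y + ((e - x)^2 + (f - y)^2))*s = 2*f*y*R1 := by
    refine mul_right_cancel₀ hbd0 ?_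
    linear_combination s*hg' - 2*e*s*hx' + s*d*hRp + s*b*hRq - 2*f*R1*hy'
  have h2fy : (2*f*y) ≠ 0 := by positivity
  field_simp
  linear_combination key

/-- Let `r₁ > 0` satisfy `tanh r₁ * r₁ ≥ log 8`.  Then for all points `p q` in the
hyperbolic plane (upper half-plane model), the closed hyperbolic ball of radius
`d(p,q)/2 − r₁` centered at the midpoint `m` of `p` and `q` is contained in every
open hyperbolic ball having both `p` and `q` on its boundary. -/
theorem thick_intersection_of_balls (r₁ : ℝ) (hr₁ : 0 < r₁)
    (hr₁' : Real.tanh r₁ * r₁ ≥ Real.log 8) (p q m : ℍ)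
    (hm₁ : dist p m = dist p q / 2) (hm₂ : dist m q = dist p q / 2)
    (c : ℍ) (R : ℝ) (hp : dist c p = R) (hq : dist c q = R) :
    closedBall m (dist p q / 2 - r₁) ⊆ ball c R := by
  rcases lt_or_ge (dist p q / 2 - r₁) 0 with hneg | hpos
  · rw [closedBall_eq_empty.2 hneg]; exact Set.empty_subset _
  -- r₁ > log 4
  have htanh : Real.tanh r₁ < 1 := by
    rw [Real.tanh_eq_sinh_div_cosh]
    rw [div_lt_one (Real.cosh_pos _)]
    nlinarith [Real.sinh_eq r₁, Real.cosh_eq r₁, Real.exp_pos (-r₁)]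
  have hlog8 : Real.log 8 < r₁ := by nlinarith
  have hlog4 : Real.log 4 < r₁ :=
    lt_trans (Real.log_lt_log (by norm_num) (by norm_num)) hlog8
  have hlog4' : 0 < Real.log 4 := Real.log_pos (by norm_num)
  -- setup
  have hd2 : 0 < dist p q / 2 := by linarith
  set s : ℝ := Real.cosh (dist p q / 2) with hs_def
  have hs : 1 < s := Real.one_lt_cosh.mpr (ne_of_gt hd2)
  set R1 : ℝ := Real.cosh R with hR1_def
  have hsq : ∀ z w : ℂ, dist z w ^ 2 = (z.re - w.re)^2 + (z.im - w.im)^2 := by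
    intro z w
    rw [Complex.dist_eq_re_im, Real.sq_sqrt (by positivity)]
  have hcd : ∀ z w : ℍ, Real.cosh (dist z w)
      = 1 + ((z.re - w.re)^2 + (z.im - w.im)^2) / (2 * z.im * w.im) := by
    intro z w
    rw [UpperHalfPlane.cosh_dist, hsq, UpperHalfPlane.coe_re, UpperHalfPlane.coe_re,
      UpperHalfPlane.coe_im, UpperHalfPlane.coe_im]
  have hbpos := p.im_pos
  have hdpos := q.im_pos
  have hypos := m.im_pos
  have hfpos := c.im_pos
  have E1 : (p.re - m.re)^2 + (p.im - m.im)^2 = 2*(s-1)*p.im*m.im := by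
    have h1 := hcd p m
    rw [hm₁, ← hs_def] at h1
    have h2 : ((p.re - m.re)^2 + (p.im - m.im)^2) / (2*p.im*m.im) = s - 1 := by linarith
    rw [div_eq_iff (by nlinarith [p.im_pos, m.im_pos] : (2*p.im*m.im) ≠ 0)] at h2
    linear_combination h2
  have E2 : (q.re - m.re)^2 + (q.im - m.im)^2 = 2*(s-1)*q.im*m.im := by
    have h1 := hcd m q
    rw [hm₂, ← hs_def] at h1
    have h2 : ((m.re - q.re)^2 + (m.im - q.im)^2) / (2*m.im*q.im) = s - 1 := by linarith
    rw [div_eq_iff (by nlinarith [q.im_pos, m.im_pos] : (2*m.im*q.im) ≠ 0)] at h2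
    linear_combination h2
  have E3 : (p.re - q.re)^2 + (p.im - q.im)^2 = 4*(s^2-1)*p.im*q.im := by
    have h1 := hcd p q
    have hc2 : Real.cosh (dist p q) = 2*s^2 - 1 := by
      have h2 : dist p q = 2 * (dist p q / 2) := by ring
      have h3 := Real.cosh_sq (dist p q / 2)
      rw [h2, Real.cosh_two_mul, ← hs_def]
      rw [← hs_def] at h3
      linarith
    rw [hc2] at h1
    have h2 : ((p.re - q.re)^2 + (p.im - q.im)^2) / (2*p.im*q.im) = 2*s^2 - 2 := by linarith
    rw [div_eq_iff (by nlinarith [p.im_pos, q.im_pos] : (2*p.im*q.im) ≠ 0)] at h2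
    linear_combination h2
  have hRp : (c.re - p.re)^2 + (c.im - p.im)^2 = (R1 - 1)*(2*c.im*p.im) := by
    have h1 := hcd c p
    rw [hp, ← hR1_def] at h1
    have h2 : ((c.re - p.re)^2 + (c.im - p.im)^2) / (2*c.im*p.im) = R1 - 1 := by linarith
    rw [div_eq_iff (by nlinarith [c.im_pos, p.im_pos] : (2*c.im*p.im) ≠ 0)] at h2
    linear_combination h2
  have hRq : (c.re - q.re)^2 + (c.im - q.im)^2 = (R1 - 1)*(2*c.im*q.im) := by
    have h1 := hcd c q
    rw [hq, ← hR1_def] at h1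
    have h2 : ((c.re - q.re)^2 + (c.im - q.im)^2) / (2*c.im*q.im) = R1 - 1 := by linarith
    rw [div_eq_iff (by nlinarith [c.im_pos, q.im_pos] : (2*c.im*q.im) ≠ 0)] at h2
    linear_combination h2
  have keyeq : Real.cosh (dist c m) * s = R1 := by
    have h1 := key_alg p.re p.im q.re q.im m.re m.im c.re c.im s R1
      hbpos hdpos hypos hfpos hs E1 E2 E3 hRp hRq
    rw [hcd c m]
    exact h1
  -- Now the distance estimates
  have hR0 : 0 ≤ R := hp ▸ dist_nonneg
  have hu0 : 0 ≤ dist c m := dist_nonneg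
  have hcosh_ge : ∀ t : ℝ, Real.exp t / 2 ≤ Real.cosh t := by
    intro t
    rw [Real.cosh_eq]
    have := Real.exp_pos (-t)
    linarith
  have hcoshR_le : R1 ≤ Real.exp R := by
    rw [hR1_def, Real.cosh_eq]
    have h1 : Real.exp (-R) ≤ Real.exp R := Real.exp_le_exp.mpr (by linarith)
    linarith
  have hprod : Real.exp (dist c m + dist p q / 2) / 4 ≤ R1 := by
    have h1 := hcosh_ge (dist c m)
    have h2 := hcosh_ge (dist p q / 2)
    have h3 : Real.exp (dist c m) / 2 * (Real.exp (dist p q / 2) / 2)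
        ≤ Real.cosh (dist c m) * s := by
      exact mul_le_mul h1 h2 (by positivity) (Real.cosh_pos _).le
    rw [keyeq] at h3
    calc Real.exp (dist c m + dist p q / 2) / 4
        = Real.exp (dist c m) / 2 * (Real.exp (dist p q / 2) / 2) := by
          rw [Real.exp_add]; ring
      _ ≤ R1 := h3
  have hdist_bound : dist c m + dist p q / 2 ≤ Real.log 4 + R := by
    have h1 : Real.exp (dist c m + dist p q / 2) ≤ Real.exp (Real.log 4 + R) := by
      have h4 : Real.exp (Real.log 4 + R) = 4 * Real.exp R := by
        rw [Real.exp_add, Real.exp_log (by norm_num : (0:ℝ) < 4)]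
      rw [h4]
      linarith [hprod, hcoshR_le]
    exact Real.exp_le_exp.mp h1
  intro z hz
  rw [mem_closedBall] at hz
  rw [mem_ball]
  have htri : dist z c ≤ dist z m + dist m c := dist_triangle z m c
  have hmc : dist m c = dist c m := dist_comm m c
  calc dist z c ≤ dist z m + dist m c := htri
    _ ≤ (dist p q / 2 - r₁) + dist c m := by rw [hmc]; linarith
    _ < R := by linarith
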